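/- arXiv:1610.09151 — 3 statements merged into one kernel-verified Lean document; each statement's English description precedes it below -/
import Mathlib

section
/- Let X be a Banach space and f : [0,1] → X be strongly measurable. Then for every ε > 0 there exists a countable measurable partition (A_h) of [0,1] such that f restricted to each A_h is Bochner integrable, and for every countable measurable partition (A'_k) refining (A_h) and any choice of points t_k ∈ A'_k, we have ∑_k ‖f(t_k)·λ(A'_k) − ∫_{A'_k} f dλ‖ ≤ ε. -/
open MeasureTheory Set Filter
open scoped Topology ENNReal

noncomputable section

/-- A countable measurable partition of `[0,1]`. -/
def IsCountablePartition (A : ℕ → Set ℝ) : Prop :=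
  (∀ n, MeasurableSet (A n)) ∧ Pairwise (Function.onFun Disjoint A) ∧
    (⋃ n, A n) = Set.Icc (0:ℝ) 1

/-- `A'` refines `A`: every member of `A'` is contained in some member of `A`. -/
def Refines (A' A : ℕ → Set ℝ) : Prop := ∀ k, ∃ h, A' k ⊆ A h

theorem stmt0 {X : Type*} [NormedAddCommGroup X] [NormedSpace ℝ X] [CompleteSpace X]
    (f : ℝ → X)
    (hf : AEStronglyMeasurable f (volume.restrict (Set.Icc (0:ℝ) 1))) :
    ∀ ε > (0:ℝ), ∃ A : ℕ → Set ℝ, IsCountablePartition A ∧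
      (∀ h, IntegrableOn f (A h) volume) ∧
      ∀ A' : ℕ → Set ℝ, IsCountablePartition A' → Refines A' A →
        ∀ t : ℕ → ℝ, (∀ k, t k ∈ A' k) →
          ∑' k, ‖(volume (A' k)).toReal • f (t k) - ∫ x in A' k, f x‖ ≤ ε := by
  intro ε hε
  set δ : ℝ := ε / 4 with hδdef
  have hδ : 0 < δ := by positivity
  set g := hf.mk f with hgdef
  have hg : StronglyMeasurable g := hf.stronglyMeasurable_mk
  have hfg : f =ᵐ[volume.restrict (Set.Icc (0:ℝ) 1)] g := hf.ae_eq_mk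
  have hT : volume.restrict (Set.Icc (0:ℝ) 1) {x | f x ≠ g x} = 0 := ae_iff.mp hfg
  obtain ⟨N, hTN, hNmeas, hNnull⟩ := exists_measurable_superset_of_null hT
  have hNIcc : volume (N ∩ Set.Icc (0:ℝ) 1) = 0 := by
    rwa [Measure.restrict_apply hNmeas] at hNnull
  -- separability of range of g
  obtain ⟨c, hc_count, hc_sub⟩ := hg.isSeparable_range
  have hc_ne : c.Nonempty := by
    rcases c.eq_empty_or_nonempty with h | h
    · exfalso
      have : g 0 ∈ closure c := hc_sub (mem_range_self 0)
      simp [h] at this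
    · exact h
  obtain ⟨x, hx⟩ := Set.Countable.exists_eq_range hc_count hc_ne
  -- the balls
  set B : ℕ → Set ℝ := fun i => {s | ‖g s - x i‖ < δ} with hBdef
  have measB : ∀ i, MeasurableSet (B i) := by
    intro i
    exact measurableSet_lt ((hg.sub stronglyMeasurable_const).norm).measurable
      measurable_const
  set G : Set ℝ := Set.Icc (0:ℝ) 1 \ N with hGdef
  have hGmeas : MeasurableSet G := measurableSet_Icc.diff hNmeas
  have hGfg : ∀ s ∈ G, f s = g s := by
    intro s hs
    by_contra h
    exact hs.2 (hTN h)
  have hcover : ∀ s ∈ G, ∃ i, s ∈ B i := by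
    intro s _
    have : g s ∈ closure c := hc_sub (mem_range_self s)
    rw [hx, Metric.mem_closure_iff] at this
    obtain ⟨b, ⟨i, rfl⟩, hb⟩ := this δ hδ
    exact ⟨i, by simpa [hBdef, dist_eq_norm] using hb⟩
  -- the partition
  set A : ℕ → Set ℝ := fun n =>
    Nat.casesOn n (N ∩ Set.Icc (0:ℝ) 1) (fun i => disjointed B i ∩ G) with hAdef
  have hAmeas : ∀ n, MeasurableSet (A n) := by
    rintro (_ | i)
    · exact hNmeas.inter measurableSet_Icc
    · exact (MeasurableSet.disjointed measB i).inter hGmeas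
  have hAdisj : Pairwise (Function.onFun Disjoint A) := by
    have h0succ : ∀ i, Disjoint (A 0) (A (i + 1)) := by
      intro i
      rw [Set.disjoint_left]
      rintro s ⟨hsN, _⟩ ⟨_, hsG⟩
      exact hsG.2 hsN
    rintro (_ | m) (_ | n) hmn
    · exact absurd rfl hmn
    · exact h0succ n
    · exact (h0succ m).symm
    · have : m ≠ n := fun h => hmn (by rw [h])
      exact Set.disjoint_of_subset inter_subset_left inter_subset_left
        (disjoint_disjointed B this)
  have hAunion : (⋃ n, A n) = Set.Icc (0:ℝ) 1 := by
    apply Set.Subset.antisymm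
    · apply Set.iUnion_subset
      rintro (_ | i)
      · exact inter_subset_right
      · exact inter_subset_right.trans diff_subset
    · intro s hs
      by_cases hsN : s ∈ N
      · exact Set.mem_iUnion.2 ⟨0, hsN, hs⟩
      · have hsG : s ∈ G := ⟨hs, hsN⟩
        obtain ⟨i, hi⟩ := hcover s hsG
        have : s ∈ ⋃ n, disjointed B n := by
          rw [iUnion_disjointed]; exact Set.mem_iUnion.2 ⟨i, hi⟩
        obtain ⟨j, hj⟩ := Set.mem_iUnion.1 this
        exact Set.mem_iUnion.2 ⟨j + 1, hj, hsG⟩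
  -- key : on A (i+1), f is within δ of x i
  have hosc : ∀ i, ∀ s ∈ A (i + 1), ‖f s - x i‖ < δ := by
    intro i s hs
    have hsG : s ∈ G := hs.2
    rw [hGfg s hsG]
    exact disjointed_subset B i hs.1
  have hAsubIcc : ∀ n, A n ⊆ Set.Icc (0:ℝ) 1 := by
    intro n
    rw [← hAunion]; exact Set.subset_iUnion A n
  -- integrability
  have hint : ∀ h, IntegrableOn f (A h) volume := by
    rintro (_ | i)
    · have : volume.restrict (A 0) = 0 := by
        rw [Measure.restrict_eq_zero]; exact hNIcc
      rw [IntegrableOn, this]; exact integrable_zero_measure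
    · refine ⟨hf.mono_measure (Measure.restrict_mono (hAsubIcc (i + 1)) le_rfl), ?_⟩
      apply HasFiniteIntegral.restrict_of_bounded (C := ‖x i‖ + δ)
      · exact lt_of_le_of_lt (measure_mono (hAsubIcc (i + 1)))
          (by simp [Real.volume_Icc])
      · rw [ae_restrict_iff' (hAmeas (i + 1))]
        apply ae_of_all
        intro s hs
        have := (hosc i s hs).le
        calc ‖f s‖ = ‖x i + (f s - x i)‖ := by rw [add_sub_cancel]
          _ ≤ ‖x i‖ + ‖f s - x i‖ := norm_add_le _ _
          _ ≤ ‖x i‖ + δ := by linarith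
  refine ⟨A, ⟨hAmeas, hAdisj, hAunion⟩, hint, ?_⟩
  rintro A' ⟨hA'meas, hA'disj, hA'union⟩ href t ht
  have hA'subIcc : ∀ k, A' k ⊆ Set.Icc (0:ℝ) 1 := by
    intro k; rw [← hA'union]; exact Set.subset_iUnion A' k
  have hvolsum : ∑' k, volume (A' k) = 1 := by
    rw [← measure_iUnion hA'disj hA'meas, hA'union]
    simp [Real.volume_Icc]
  have hfin : ∀ k, volume (A' k) < ∞ := by
    intro k
    calc volume (A' k) ≤ ∑' j, volume (A' j) := ENNReal.le_tsum k
      _ < ∞ := by rw [hvolsum]; norm_num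
  -- the key pointwise bound
  have key : ∀ k, ‖(volume (A' k)).toReal • f (t k) - ∫ x in A' k, f x‖ ≤
      (2 * δ) * (volume (A' k)).toReal := by
    intro k
    obtain ⟨h, hsub⟩ := href k
    match h with
    | 0 =>
      have hz : volume (A' k) = 0 :=
        le_antisymm (le_trans (measure_mono hsub) hNIcc.le) (zero_le)
      have : volume.restrict (A' k) = 0 := Measure.restrict_eq_zero.2 hz
      rw [hz, this]
      simp
    | i + 1 =>
      have hIf : IntegrableOn f (A' k) volume := (hint (i + 1)).mono_set hsub
      have hbound : ∀ s ∈ A' k, ‖f (t k) - f s‖ ≤ 2 * δ := by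
        intro s hs
        have h1 := (hosc i (t k) (hsub (ht k))).le
        have h2 := (hosc i s (hsub hs)).le
        calc ‖f (t k) - f s‖ = ‖(f (t k) - x i) - (f s - x i)‖ := by
              rw [sub_sub_sub_cancel_right]
          _ ≤ ‖f (t k) - x i‖ + ‖f s - x i‖ := norm_sub_le _ _
          _ ≤ 2 * δ := by linarith
      have hconst : (volume (A' k)).toReal • f (t k) = ∫ _ in A' k, f (t k) := by
        rw [setIntegral_const]; rfl
      rw [hconst, ← integral_sub (integrableOn_const (C := f (t k)) (hfin k).ne) hIf]
      exact norm_setIntegral_le_of_norm_le_const_ae' (hfin k)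
        (ae_of_all _ fun s hs => hbound s hs)
  -- sum it up
  have hsummable : Summable fun k => (volume (A' k)).toReal :=
    ENNReal.summable_toReal (by rw [hvolsum]; norm_num)
  have hsummable2 : Summable fun k => (2 * δ) * (volume (A' k)).toReal :=
    hsummable.mul_left _
  have hsumLHS : Summable fun k =>
      ‖(volume (A' k)).toReal • f (t k) - ∫ x in A' k, f x‖ :=
    Summable.of_nonneg_of_le (fun k => norm_nonneg _) key hsummable2
  calc ∑' k, ‖(volume (A' k)).toReal • f (t k) - ∫ x in A' k, f x‖
      ≤ ∑' k, (2 * δ) * (volume (A' k)).toReal := Summable.tsum_le_tsum key hsumLHS hsummable2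
    _ = (2 * δ) * ∑' k, (volume (A' k)).toReal := tsum_mul_left
    _ = (2 * δ) * 1 := by
        rw [← ENNReal.tsum_toReal_eq (fun k => (hfin k).ne), hvolsum]
        norm_num
    _ ≤ ε := by rw [hδdef]; linarith
end
end

section
/- With f : [0,1] → c₀ as above, the set { F(I) : I a subinterval of [0,1] } of values of the primitive F(I) = ( λ(I ∩ J_{2n−1})/(2|J_{2n−1}|) − λ(I ∩ J_{2n})/(2|J_{2n}|) )_n is not relatively norm compact in c₀; in particular, taking I = [0, b_{2n−1}] for each n yields a sequence in this set with no norm-convergent subsequence. -/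
open MeasureTheory Set Filter
open scoped Topology ENNReal ZeroAtInfty

noncomputable section

theorem stmt9 (a b : ℕ → ℝ)
    (ha0 : a 0 = 0) (hab : ∀ n, a n < b n) (hba : ∀ n, b n < a (n + 1))
    (hb1 : Tendsto b atTop (𝓝 (1:ℝ)))
    (F : ℝ → ℝ → C₀(ℕ, ℝ))
    (hF : ∀ u v n, F u v n =
      (volume (Set.Icc u v ∩ Set.Icc (a (2 * n)) (b (2 * n)))).toReal /
          (2 * (b (2 * n) - a (2 * n))) -
        (volume (Set.Icc u v ∩ Set.Icc (a (2 * n + 1)) (b (2 * n + 1)))).toReal /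
          (2 * (b (2 * n + 1) - a (2 * n + 1)))) :
    ¬ IsCompact (closure {w : C₀(ℕ, ℝ) | ∃ u v : ℝ, 0 ≤ u ∧ u ≤ v ∧ v ≤ 1 ∧ w = F u v}) ∧
    ∀ φ : ℕ → ℕ, StrictMono φ →
      ¬ ∃ x : C₀(ℕ, ℝ), Tendsto (fun m => F 0 (b (2 * φ m))) atTop (𝓝 x) := by
  have hbmono : StrictMono b := strictMono_nat_of_lt_succ fun n => (hba n).trans (hab (n + 1))
  have hamono : StrictMono a := strictMono_nat_of_lt_succ fun n => (hab n).trans (hba n)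
  have ha_nonneg : ∀ n, 0 ≤ a n := fun n => ha0 ▸ hamono.monotone (Nat.zero_le n)
  have hb_nonneg : ∀ n, 0 ≤ b n := fun n => (ha_nonneg n).trans (hab n).le
  have hb_le1 : ∀ n, b n ≤ 1 := fun n => hbmono.monotone.ge_of_tendsto hb1 n
  have hba' : ∀ m k, m < k → b m < a k := fun m k h => (hba m).trans_le (hamono.monotone h)
  have key : ∀ m n, F 0 (b (2 * m)) n = if n = m then 1 / 2 else 0 := by
    intro m n
    have hvol_full : ∀ k, k ≤ 2 * m →
        (volume (Icc (0:ℝ) (b (2 * m)) ∩ Icc (a k) (b k))).toReal = b k - a k := by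
      intro k hk
      have hsub : Icc (a k) (b k) ⊆ Icc (0:ℝ) (b (2 * m)) :=
        Icc_subset_Icc (ha_nonneg k) (hbmono.monotone hk)
      rw [inter_eq_right.mpr hsub, Real.volume_Icc,
        ENNReal.toReal_ofReal (by linarith [hab k])]
    have hvol_empty : ∀ k, 2 * m < k →
        (volume (Icc (0:ℝ) (b (2 * m)) ∩ Icc (a k) (b k))).toReal = 0 := by
      intro k hk
      have hlt := hba' (2 * m) k hk
      have hE : Icc (0:ℝ) (b (2 * m)) ∩ Icc (a k) (b k) = ∅ := by
        rw [Set.Icc_inter_Icc]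
        apply Set.Icc_eq_empty
        simp only [not_le]
        calc min (b (2 * m)) (b k) ≤ b (2 * m) := min_le_left _ _
          _ < a k := hlt
          _ ≤ max 0 (a k) := le_max_right _ _
      rw [hE]; simp
    have half : ∀ x y : ℝ, x < y → (y - x) / (2 * (y - x)) = 1 / 2 := by
      intro x y h
      have : y - x ≠ 0 := sub_ne_zero.mpr h.ne'
      field_simp
    rw [hF]
    rcases lt_trichotomy n m with h | h | h
    · rw [if_neg h.ne, hvol_full (2 * n) (by omega), hvol_full (2 * n + 1) (by omega),
        half _ _ (hab (2 * n)), half _ _ (hab (2 * n + 1)), sub_self]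
    · subst h
      rw [if_pos rfl, hvol_full (2 * n) le_rfl, hvol_empty (2 * n + 1) (by omega),
        half _ _ (hab (2 * n)), zero_div, sub_zero]
    · rw [if_neg h.ne', hvol_empty (2 * n) (by omega), hvol_empty (2 * n + 1) (by omega)]
      simp
  have hdist : ∀ m k, m ≠ k → (1:ℝ) / 2 ≤ dist (F 0 (b (2 * m))) (F 0 (b (2 * k))) := by
    intro m k hmk
    have hdiff : (F 0 (b (2 * m)) - F 0 (b (2 * k))) m = 1 / 2 := by
      have : (F 0 (b (2 * m)) - F 0 (b (2 * k))) m = F 0 (b (2 * m)) m - F 0 (b (2 * k)) m := rfl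
      rw [this, key m m, key k m, if_pos rfl, if_neg hmk, sub_zero]
    set g := F 0 (b (2 * m)) - F 0 (b (2 * k)) with hg
    have hle : ‖g m‖ ≤ ‖g‖ := by
      rw [← ZeroAtInftyContinuousMap.norm_toBCF_eq_norm]
      exact BoundedContinuousFunction.norm_coe_le_norm g.toBCF m
    rw [dist_eq_norm, ← hg]
    calc (1:ℝ) / 2 = ‖g m‖ := by rw [hdiff, Real.norm_eq_abs, abs_of_nonneg]; norm_num
      _ ≤ _ := hle
  have hsec : ∀ φ : ℕ → ℕ, StrictMono φ →
      ¬ ∃ x : C₀(ℕ, ℝ), Tendsto (fun m => F 0 (b (2 * φ m))) atTop (𝓝 x) := by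
    rintro φ hφ ⟨x, hx⟩
    have hc : CauchySeq (fun m => F 0 (b (2 * φ m))) := hx.cauchySeq
    rcases Metric.cauchySeq_iff.mp hc (1 / 4) (by norm_num) with ⟨N, hN⟩
    have h1 := hN (N + 1) (by omega) N le_rfl
    have h2 := hdist (φ (N + 1)) (φ N)
      (fun h => absurd h (hφ (Nat.lt_succ_self N)).ne')
    linarith
  refine ⟨?_, hsec⟩
  intro hcomp
  have hmem : ∀ m : ℕ, F 0 (b (2 * m)) ∈
      closure {w : C₀(ℕ, ℝ) | ∃ u v : ℝ, 0 ≤ u ∧ u ≤ v ∧ v ≤ 1 ∧ w = F u v} :=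
    fun m => subset_closure ⟨0, b (2 * m), le_rfl, hb_nonneg _, hb_le1 _, rfl⟩
  obtain ⟨x, -, φ, hφ, hx⟩ := hcomp.tendsto_subseq hmem
  exact hsec φ hφ ⟨x, hx⟩
end
end

section
/- Let X be a Banach space, Γ : [0,1] → cwk(X) a Henstock–Kurzweil–Pettis integrable multifunction with primitive Φ, and f : [0,1] → X a Henstock–Kurzweil–Pettis integrable selection of Γ with primitive φ. Then φ(I) ∈ Φ(I) for every closed subinterval I ⊆ [0,1]. -/
open MeasureTheory Set Filter
open scoped Topology ENNReal

noncomputable section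

/-- `S` is a nonempty convex weakly compact subset of `X`. -/
def IsCWK {X : Type*} [NormedAddCommGroup X] [NormedSpace ℝ X] (S : Set X) : Prop :=
  S.Nonempty ∧ Convex ℝ S ∧ IsCompact ((toWeakSpace ℝ X) '' S)

/-- `y` is the Henstock–Kurzweil integral of `g` over `[u,v]`. -/
def HKIntegralOn (g : ℝ → ℝ) (u v : ℝ) (y : ℝ) : Prop :=
  ∀ ε > (0:ℝ), ∃ δ : ℝ → ℝ, (∀ x, 0 < δ x) ∧
    ∀ (n : ℕ) (c t : ℕ → ℝ), c 0 = u → c n = v →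
      (∀ i < n, c i ≤ c (i + 1)) →
      (∀ i < n, t i ∈ Set.Icc (c i) (c (i + 1))) →
      (∀ i < n, Set.Icc (c i) (c (i + 1)) ⊆ Set.Ioo (t i - δ (t i)) (t i + δ (t i))) →
      |(∑ i ∈ Finset.range n, (c (i + 1) - c i) * g (t i)) - y| < ε

/-- Existence of a δ-fine tagged partition of `[u,v]`. -/
def HasTagged (δ : ℝ → ℝ) (u v : ℝ) : Prop :=
  ∃ n : ℕ, ∃ c t : ℕ → ℝ, c 0 = u ∧ c n = v ∧
    (∀ i < n, c i ≤ c (i + 1)) ∧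
    (∀ i < n, t i ∈ Set.Icc (c i) (c (i + 1))) ∧
    (∀ i < n, Set.Icc (c i) (c (i + 1)) ⊆ Set.Ioo (t i - δ (t i)) (t i + δ (t i)))

lemma hasTagged_refl (δ : ℝ → ℝ) (u : ℝ) : HasTagged δ u u :=
  ⟨0, fun _ => u, fun _ => u, rfl, rfl,
    fun i hi => absurd hi (Nat.not_lt_zero i),
    fun i hi => absurd hi (Nat.not_lt_zero i),
    fun i hi => absurd hi (Nat.not_lt_zero i)⟩

lemma hasTagged_extend {δ : ℝ → ℝ} {u x s τ : ℝ} (h : HasTagged δ u x) (hxs : x ≤ s)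
    (hτ : τ ∈ Set.Icc x s) (hfine : Set.Icc x s ⊆ Set.Ioo (τ - δ τ) (τ + δ τ)) :
    HasTagged δ u s := by
  obtain ⟨n, c, t, h0, hn, hm, ht, hfn⟩ := h
  refine ⟨n + 1, fun i => if i = n + 1 then s else c i, fun i => if i = n then τ else t i,
    ?_, ?_, ?_, ?_, ?_⟩
  · simp [h0, Nat.succ_ne_zero]
  · simp
  · intro i hi
    by_cases hin : i = n
    · subst hin; simp [hn, hxs]
    · have hi' : i < n := by omega
      have : i + 1 ≠ n + 1 := by omega
      simp only [if_neg (by omega : i ≠ n + 1), if_neg this]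
      exact hm i hi'
  · intro i hi
    by_cases hin : i = n
    · subst hin; simpa [hn] using hτ
    · have hi' : i < n := by omega
      simp only [if_neg hin, if_neg (by omega : i ≠ n + 1), if_neg (by omega : i + 1 ≠ n + 1)]
      exact ht i hi'
  · intro i hi
    by_cases hin : i = n
    · subst hin; simpa [hn] using hfine
    · have hi' : i < n := by omega
      simp only [if_neg hin, if_neg (by omega : i ≠ n + 1), if_neg (by omega : i + 1 ≠ n + 1)]
      exact hfn i hi'

/-- Cousin's lemma. -/
lemma cousin {δ : ℝ → ℝ} (hδ : ∀ x, 0 < δ x) {u v : ℝ} (huv : u ≤ v) : HasTagged δ u v := by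
  set S : Set ℝ := {x | x ∈ Set.Icc u v ∧ HasTagged δ u x} with hS
  have hus : u ∈ S := ⟨⟨le_refl u, huv⟩, hasTagged_refl δ u⟩
  have hne : S.Nonempty := ⟨u, hus⟩
  have hbdd : BddAbove S := ⟨v, fun x hx => hx.1.2⟩
  set s := sSup S with hsdef
  have hsu : u ≤ s := le_csSup hbdd hus
  have hsv : s ≤ v := csSup_le hne fun x hx => hx.1.2
  have hsS : HasTagged δ u s := by
    obtain ⟨x, hxS, hxgt⟩ := exists_lt_of_lt_csSup hne (show s - δ s < s by linarith [hδ s])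
    have hxle : x ≤ s := le_csSup hbdd hxS
    exact hasTagged_extend hxS.2 hxle ⟨hxle, le_refl s⟩
      (fun y hy => ⟨lt_of_lt_of_le hxgt hy.1, lt_of_le_of_lt hy.2 (by linarith [hδ s])⟩)
  rcases eq_or_lt_of_le hsv with heq | hlt
  · rwa [heq] at hsS
  · exfalso
    set s' := min v (s + δ s / 2) with hs'
    have h1 : s < s' := lt_min hlt (by linarith [hδ s])
    have hs'S : s' ∈ S := by
      refine ⟨⟨le_trans hsu h1.le, min_le_left _ _⟩, ?_⟩
      refine hasTagged_extend hsS h1.le ⟨le_refl s, h1.le⟩ fun y hy => ?_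
      refine ⟨by linarith [hδ s, hy.1], lt_of_le_of_lt (le_trans hy.2 (min_le_right _ _)) ?_⟩
      linarith [hδ s]
    have := le_csSup hbdd hs'S
    linarith

lemma chain_le {c : ℕ → ℝ} {n : ℕ} (h : ∀ i < n, c i ≤ c (i + 1)) :
    ∀ j ≤ n, ∀ i ≤ j, c i ≤ c j := by
  intro j
  induction j with
  | zero => intro _ i hi; interval_cases i; exact le_refl _
  | succ k ih =>
    intro hk i hi
    rcases Nat.le_succ_iff.mp hi with hik | rfl
    · exact le_trans (ih (by omega) i hik) (h k (by omega))
    · exact le_refl _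

/-- Monotonicity of the HK integral (comparison of integrands). -/
lemma hk_le {g h : ℝ → ℝ} {u v y z : ℝ} (huv : u ≤ v)
    (hg : HKIntegralOn g u v y) (hh : HKIntegralOn h u v z)
    (hle : ∀ s ∈ Set.Icc u v, g s ≤ h s) : y ≤ z := by
  by_contra hyz
  push_neg at hyz
  set ε := (y - z) / 2 with hε
  have hεpos : 0 < ε := by linarith
  obtain ⟨δ₁, hδ₁, H₁⟩ := hg ε hεpos
  obtain ⟨δ₂, hδ₂, H₂⟩ := hh ε hεpos
  set δ : ℝ → ℝ := fun x => min (δ₁ x) (δ₂ x) with hδdef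
  have hδ : ∀ x, 0 < δ x := fun x => lt_min (hδ₁ x) (hδ₂ x)
  obtain ⟨n, c, t, h0, hn, hm, ht, hfn⟩ := cousin hδ huv
  have hfn₁ : ∀ i < n, Set.Icc (c i) (c (i + 1)) ⊆
      Set.Ioo (t i - δ₁ (t i)) (t i + δ₁ (t i)) := by
    intro i hi x hx
    have := hfn i hi hx
    constructor
    · have : t i - δ₁ (t i) ≤ t i - δ (t i) := by
        have := min_le_left (δ₁ (t i)) (δ₂ (t i)); linarith
      exact lt_of_le_of_lt this (hfn i hi hx).1
    · have : t i + δ (t i) ≤ t i + δ₁ (t i) := by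
        have := min_le_left (δ₁ (t i)) (δ₂ (t i)); linarith
      exact lt_of_lt_of_le (hfn i hi hx).2 this
  have hfn₂ : ∀ i < n, Set.Icc (c i) (c (i + 1)) ⊆
      Set.Ioo (t i - δ₂ (t i)) (t i + δ₂ (t i)) := by
    intro i hi x hx
    constructor
    · have : t i - δ₂ (t i) ≤ t i - δ (t i) := by
        have := min_le_right (δ₁ (t i)) (δ₂ (t i)); linarith
      exact lt_of_le_of_lt this (hfn i hi hx).1
    · have : t i + δ (t i) ≤ t i + δ₂ (t i) := by
        have := min_le_right (δ₁ (t i)) (δ₂ (t i)); linarith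
      exact lt_of_lt_of_le (hfn i hi hx).2 this
  have hsum1 := H₁ n c t h0 hn hm ht hfn₁
  have hsum2 := H₂ n c t h0 hn hm ht hfn₂
  have htags : ∀ i < n, t i ∈ Set.Icc u v := by
    intro i hi
    have h1 : u ≤ c i := by
      have := chain_le hm i hi.le 0 (Nat.zero_le i); rwa [h0] at this
    have h2 : c (i + 1) ≤ v := by
      have := chain_le hm n (le_refl n) (i + 1) hi; rwa [hn] at this
    exact ⟨le_trans h1 (ht i hi).1, le_trans (ht i hi).2 h2⟩
  have hsle : (∑ i ∈ Finset.range n, (c (i + 1) - c i) * g (t i)) ≤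
      ∑ i ∈ Finset.range n, (c (i + 1) - c i) * h (t i) := by
    refine Finset.sum_le_sum fun i hi => ?_
    have hi' := Finset.mem_range.mp hi
    exact mul_le_mul_of_nonneg_left (hle _ (htags i hi')) (by linarith [hm i hi'])
  rw [abs_lt] at hsum1 hsum2
  linarith [hsum1.1, hsum2.2]

lemma weakSpace_t2 {X : Type*} [NormedAddCommGroup X] [NormedSpace ℝ X] :
    T2Space (WeakSpace ℝ X) := by
  constructor
  intro x y hxy
  have hne : (toWeakSpace ℝ X).symm x ≠ (toWeakSpace ℝ X).symm y :=
    fun h => hxy ((toWeakSpace ℝ X).symm.injective h)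
  obtain ⟨x', hx'⟩ := SeparatingDual.exists_separating_of_ne (R := ℝ) hne
  exact separated_by_continuous
    (f := fun w : WeakSpace ℝ X => x' ((toWeakSpace ℝ X).symm w))
    (WeakBilin.eval_continuous ((topDualPairing ℝ X).flip) x') hx'

theorem stmt10 {X : Type*} [NormedAddCommGroup X] [NormedSpace ℝ X] [CompleteSpace X]
    (Γ : ℝ → Set X) (Φ : ℝ → ℝ → Set X) (f : ℝ → X) (φ : ℝ → ℝ → X)
    (hΓ : ∀ t ∈ Set.Icc (0:ℝ) 1, IsCWK (Γ t))
    (hΦ : ∀ u v : ℝ, 0 ≤ u → u ≤ v → v ≤ 1 → IsCWK (Φ u v))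
    (hHKP : ∀ (x' : X →L[ℝ] ℝ) (u v : ℝ), 0 ≤ u → u ≤ v → v ≤ 1 →
      HKIntegralOn (fun s => sSup (x' '' Γ s)) u v (sSup (x' '' Φ u v)))
    (hsel : ∀ t ∈ Set.Icc (0:ℝ) 1, f t ∈ Γ t)
    (hf : ∀ (x' : X →L[ℝ] ℝ) (u v : ℝ), 0 ≤ u → u ≤ v → v ≤ 1 →
      HKIntegralOn (fun s => x' (f s)) u v (x' (φ u v))) :
    ∀ u v : ℝ, 0 ≤ u → u ≤ v → v ≤ 1 → φ u v ∈ Φ u v := by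
  intro u v hu huv hv
  obtain ⟨hΦne, hΦconv, hΦcpt⟩ := hΦ u v hu huv hv
  have hT2 : T2Space (WeakSpace ℝ X) := weakSpace_t2
  -- the image of a continuous linear functional on a weakly compact set is compact
  have himg : ∀ (x' : X →L[ℝ] ℝ) (S : Set X), IsCompact ((toWeakSpace ℝ X) '' S) →
      IsCompact (x' '' S) := by
    intro x' S hS
    have hgc : Continuous fun w : WeakSpace ℝ X => x' ((toWeakSpace ℝ X).symm w) :=
      WeakBilin.eval_continuous ((topDualPairing ℝ X).flip) x'
    have : x' '' S = (fun w : WeakSpace ℝ X => x' ((toWeakSpace ℝ X).symm w)) ''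
        ((toWeakSpace ℝ X) '' S) := by
      rw [Set.image_image]
      simp
    rw [this]
    exact hS.image hgc
  -- Φ u v is norm-closed
  have hclosed : IsClosed (Φ u v) := by
    have h1 : IsClosed ((toWeakSpace ℝ X) '' Φ u v) := hΦcpt.isClosed
    have h2 : Φ u v = (toWeakSpaceCLM ℝ X) ⁻¹' ((toWeakSpace ℝ X) '' Φ u v) := by
      ext x
      simp only [Set.mem_preimage, toWeakSpaceCLM_eq_toWeakSpace]
      constructor
      · exact fun hx => Set.mem_image_of_mem _ hx
      · rintro ⟨y, hy, hxy⟩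
        rwa [(toWeakSpace ℝ X).injective hxy] at hy
    rw [h2]
    exact h1.preimage (toWeakSpaceCLM ℝ X).continuous
  by_contra hmem
  obtain ⟨x', cc, hlt, hgt⟩ := geometric_hahn_banach_closed_point hΦconv hclosed hmem
  have h1 : sSup (x' '' Φ u v) ≤ cc :=
    csSup_le (hΦne.image _) (by rintro _ ⟨a, ha, rfl⟩; exact (hlt a ha).le)
  have key : x' (φ u v) ≤ sSup (x' '' Φ u v) := by
    refine hk_le huv (hf x' u v hu huv hv) (hHKP x' u v hu huv hv) fun s hs => ?_
    have hs01 : s ∈ Set.Icc (0:ℝ) 1 := ⟨le_trans hu hs.1, le_trans hs.2 hv⟩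
    have hbdd : BddAbove (x' '' Γ s) := (himg x' (Γ s) (hΓ s hs01).2.2).bddAbove
    exact le_csSup hbdd (Set.mem_image_of_mem _ (hsel s hs01))
  linarith
end
end
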